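/- arXiv:1909.12931 — 4 statements merged into one kernel-verified Lean document; each statement's English description precedes it below -/
import Mathlib

section
/- The row geometric mean weighting method satisfies scale invariance: for any multiplicative pairwise comparison matrix A, any α > 0, and any indices i, j, the RGM weight of i is at least that of j in A if and only if the RGM weight of i is at least that of j in A^(α), where (A^(α))_ij = (a_ij)^α. -/
/-- The row geometric mean method is scale invariant. -/
theorem stmt1 (n : ℕ) (A : Fin n → Fin n → ℝ)
    (hpos : ∀ i j, 0 < A i j) (hrec : ∀ i j, A j i = 1 / A i j)
    (α : ℝ) (hα : 0 < α) (i j : Fin n) :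
    ((∏ k, A i k) ^ ((n : ℝ)⁻¹) / ∑ l, (∏ k, A l k) ^ ((n : ℝ)⁻¹) ≥
      (∏ k, A j k) ^ ((n : ℝ)⁻¹) / ∑ l, (∏ k, A l k) ^ ((n : ℝ)⁻¹)) ↔
    ((∏ k, (A i k) ^ α) ^ ((n : ℝ)⁻¹) / ∑ l, (∏ k, (A l k) ^ α) ^ ((n : ℝ)⁻¹) ≥
      (∏ k, (A j k) ^ α) ^ ((n : ℝ)⁻¹) / ∑ l, (∏ k, (A l k) ^ α) ^ ((n : ℝ)⁻¹)) := by
  rcases Nat.eq_zero_or_pos n with hn | hn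
  · subst hn
    simp
  have hne : Nonempty (Fin n) := Fin.pos_iff_nonempty.1 hn
  have hProdPos : ∀ l : Fin n, (0:ℝ) < ∏ k, A l k :=
    fun l => Finset.prod_pos fun k _ => hpos l k
  have hP : ∀ l : Fin n, (0:ℝ) < (∏ k, A l k) ^ ((n : ℝ)⁻¹) := fun l =>
    Real.rpow_pos_of_pos (hProdPos l) _
  have hPα : ∀ l : Fin n, (∏ k, (A l k) ^ α) ^ ((n : ℝ)⁻¹)
      = ((∏ k, A l k) ^ ((n : ℝ)⁻¹)) ^ α := by
    intro l
    rw [Real.finset_prod_rpow _ _ (fun k _ => (hpos l k).le),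
      ← Real.rpow_mul (hProdPos l).le, mul_comm, Real.rpow_mul (hProdPos l).le]
  have hS : (0:ℝ) < ∑ l, (∏ k, A l k) ^ ((n : ℝ)⁻¹) :=
    Finset.sum_pos (fun l _ => hP l) Finset.univ_nonempty
  have hSα : (0:ℝ) < ∑ l, (∏ k, (A l k) ^ α) ^ ((n : ℝ)⁻¹) :=
    Finset.sum_pos (fun l _ => by rw [hPα l]; exact Real.rpow_pos_of_pos (hP l) _)
      Finset.univ_nonempty
  rw [ge_iff_le, ge_iff_le, div_le_div_iff_of_pos_right hS, div_le_div_iff_of_pos_right hSα, hPα i, hPα j,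
    Real.rpow_le_rpow_iff (hP j).le (hP i).le hα]
end

section
/- The eigenvector method satisfies row dominance: if A is a positive multiplicative pairwise comparison matrix, w is a positive eigenvector of A associated with its maximal (Perron) eigenvalue, and a_ik ≥ a_jk for all k, then w_i ≥ w_j. -/
/-- The eigenvector method satisfies row dominance. -/
theorem stmt5 (n : ℕ) (A : Fin n → Fin n → ℝ)
    (hpos : ∀ i j, 0 < A i j) (hrec : ∀ i j, A j i = 1 / A i j)
    (w : Fin n → ℝ) (hw : ∀ i, 0 < w i) (lam : ℝ) (hlam : 0 < lam)
    (heig : ∀ i, ∑ k, A i k * w k = lam * w i)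
    (i j : Fin n) (hdom : ∀ k, A i k ≥ A j k) :
    w i ≥ w j := by
  have h : lam * w j ≤ lam * w i := by
    rw [← heig i, ← heig j]
    exact Finset.sum_le_sum fun k _ =>
      mul_le_mul_of_nonneg_right (hdom k) (hw k).le
  exact le_of_mul_le_mul_left h hlam
end

section
/- Let A be a multiplicative pairwise comparison matrix and for α ≥ 0 let w(α) denote the RGM weight vector of A^(α). If alternative i strictly dominates all others in the sense that ∏_k a_ik > ∏_k a_jk for every j ≠ i, then w_i(α) → 1 as α → ∞. -/
/-- If alternative i strictly dominates all others (in row products), its RGM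
weight of the α-th power matrix tends to 1 as α → ∞. -/
theorem stmt13 (n : ℕ) (A : Fin n → Fin n → ℝ)
    (hpos : ∀ i j, 0 < A i j) (hrec : ∀ i j, A j i = 1 / A i j)
    (i : Fin n) (hdom : ∀ j, j ≠ i → (∏ k, A j k) < ∏ k, A i k) :
    Filter.Tendsto
      (fun α : ℝ =>
        (∏ k, A i k ^ α) ^ ((n : ℝ)⁻¹) / ∑ l, (∏ k, A l k ^ α) ^ ((n : ℝ)⁻¹))
      Filter.atTop (nhds 1) := by
  have hn : (0:ℝ) < (n : ℝ) := by exact_mod_cast i.pos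
  set P : Fin n → ℝ := fun j => ∏ k, A j k with hP
  have hPpos : ∀ j, 0 < P j := fun j => Finset.prod_pos fun k _ => hpos j k
  have hprod : ∀ (l : Fin n) (α : ℝ), (∏ k, A l k ^ α) = P l ^ α := by
    intro l α
    rw [← Real.finset_prod_rpow _ _ (fun k _ => (hpos l k).le)]
  have heq : ∀ α : ℝ,
      (∏ k, A i k ^ α) ^ ((n : ℝ)⁻¹) / ∑ l, (∏ k, A l k ^ α) ^ ((n : ℝ)⁻¹)
        = (∑ l, (P l / P i) ^ (α * (n : ℝ)⁻¹))⁻¹ := by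
    intro α
    simp only [hprod, ← Real.rpow_natCast]
    rw [eq_comm, inv_eq_iff_eq_inv, eq_comm, inv_div]
    rw [Finset.sum_div]
    congr 1
    ext l
    rw [Real.div_rpow (hPpos l).le (hPpos i).le, ← Real.rpow_mul (hPpos l).le,
      ← Real.rpow_mul (hPpos i).le]
  simp only [heq]
  have hsum : Filter.Tendsto (fun α : ℝ => ∑ l, (P l / P i) ^ (α * (n : ℝ)⁻¹))
      Filter.atTop (nhds 1) := by
    have : Filter.Tendsto (fun α : ℝ => ∑ l, (P l / P i) ^ (α * (n : ℝ)⁻¹))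
        Filter.atTop (nhds (∑ l : Fin n, if l = i then (1:ℝ) else 0)) := by
      apply tendsto_finset_sum
      intro l _
      by_cases hl : l = i
      · subst hl
        simp only [if_pos rfl, div_self (hPpos l).ne', Real.one_rpow]
        exact tendsto_const_nhds
      · simp only [if_neg hl]
        have hr0 : 0 < P l / P i := div_pos (hPpos l) (hPpos i)
        have hr1 : P l / P i < 1 := (div_lt_one (hPpos i)).mpr (hdom l hl)
        have hbase : Filter.Tendsto (fun x : ℝ => (P l / P i) ^ x)
            Filter.atTop (nhds 0) :=
          tendsto_rpow_atTop_of_base_lt_one _ (by linarith) hr1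
        exact hbase.comp (Filter.Tendsto.atTop_mul_const (by positivity) Filter.tendsto_id)
    simpa [Finset.sum_ite_eq'] using this
  simpa using hsum.inv₀ one_ne_zero
end

section
/- Let r_1, …, r_n be positive reals and for α ≥ 0 define w_i(α) = r_i^α / ∑_k r_k^α. Then the function α ↦ ∑_i w_i(α)² (the HHI of the RGM weights of A^(α)) is nondecreasing in α. -/
/-- A Chebyshev-type sum inequality: if `a` is nonnegative and `a`, `b` monovary, then
`(∑ a²)(∑ a b) ≤ (∑ a)(∑ a² b)`. -/
lemma cheb_aux {n : ℕ} (a b : Fin n → ℝ) (ha : ∀ i, 0 ≤ a i)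
    (hab : ∀ i j, 0 ≤ (a i - a j) * (b i - b j)) :
    (∑ i, a i ^ 2) * (∑ i, a i * b i) ≤ (∑ i, a i) * (∑ i, a i ^ 2 * b i) := by
  rw [Finset.sum_mul_sum, Finset.sum_mul_sum, ← sub_nonneg, ← Finset.sum_sub_distrib]
  simp_rw [← Finset.sum_sub_distrib]
  set F : Fin n → Fin n → ℝ := fun i j => a i * (a j ^ 2 * b j) - a i ^ 2 * (a j * b j) with hF
  have key : ∀ i j, 0 ≤ F i j + F j i := by
    intro i j
    have h1 : F i j + F j i = a i * a j * ((a i - a j) * (b i - b j)) := by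
      simp only [hF]; ring
    rw [h1]
    exact mul_nonneg (mul_nonneg (ha i) (ha j)) (hab i j)
  have h2 : (0:ℝ) ≤ ∑ i, ∑ j, (F i j + F j i) :=
    Finset.sum_nonneg fun i _ => Finset.sum_nonneg fun j _ => key i j
  have h3 : ∑ i, ∑ j, (F i j + F j i) = (∑ i, ∑ j, F i j) + (∑ i, ∑ j, F i j) := by
    calc ∑ i, ∑ j, (F i j + F j i)
        = (∑ i, ∑ j, F i j) + ∑ i, ∑ j, F j i := by
          simp_rw [Finset.sum_add_distrib]
      _ = (∑ i, ∑ j, F i j) + (∑ i, ∑ j, F i j) := by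
          rw [Finset.sum_comm (f := fun i j => F j i)]
  rw [h3] at h2
  linarith

/-- The HHI of softmax-type weights is nondecreasing in α on [0, ∞). -/
theorem stmt15 (n : ℕ) (r : Fin n → ℝ) (hr : ∀ i, 0 < r i) :
    MonotoneOn (fun α : ℝ => ∑ i, (r i ^ α / ∑ k, r k ^ α) ^ 2)
      (Set.Ici (0 : ℝ)) := by
  rcases Nat.eq_zero_or_pos n with hn | hn
  · subst hn
    intro α _ β _ _
    simp
  have : Nonempty (Fin n) := Fin.pos_iff_nonempty.mp hn
  intro α hα β hβ hab
  simp only [Set.mem_Ici] at hα hβ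
  set A : Fin n → ℝ := fun i => r i ^ α with hA
  set u : Fin n → ℝ := fun i => r i ^ (β - α) with hu
  have hApos : ∀ i, 0 < A i := fun i => Real.rpow_pos_of_pos (hr i) α
  have hupos : ∀ i, 0 < u i := fun i => Real.rpow_pos_of_pos (hr i) (β - α)
  have hAu : ∀ i, r i ^ β = A i * u i := by
    intro i
    rw [hA, hu]
    dsimp only
    rw [← Real.rpow_add (hr i)]
    ring_nf
  have hSA : 0 < ∑ i, A i := Finset.sum_pos (fun i _ => hApos i) Finset.univ_nonempty
  have hSB : 0 < ∑ i, A i * u i :=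
    Finset.sum_pos (fun i _ => mul_pos (hApos i) (hupos i)) Finset.univ_nonempty
  show (∑ i, (r i ^ α / ∑ k, r k ^ α) ^ 2) ≤ ∑ i, (r i ^ β / ∑ k, r k ^ β) ^ 2
  simp only [hAu]
  show (∑ i, (A i / ∑ k, A k) ^ 2) ≤ ∑ i, (A i * u i / ∑ k, A k * u k) ^ 2
  simp only [div_pow, ← Finset.sum_div]
  rw [div_le_div_iff₀ (by positivity) (by positivity)]
  -- Goal: (∑ A i ^ 2) * (∑ A u) ^ 2 ≤ (∑ (A u) ^ 2) * (∑ A) ^ 2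
  have hmono : ∀ i j, 0 ≤ (A i - A j) * (u i ^ 2 - u j ^ 2) := by
    intro i j
    rcases le_total (r i) (r j) with h | h
    · have h1 : A i ≤ A j := Real.rpow_le_rpow (hr i).le h hα
      have h2 : u i ≤ u j := Real.rpow_le_rpow (hr i).le h (by linarith)
      have h3 : u i ^ 2 ≤ u j ^ 2 := by nlinarith [hupos i, hupos j]
      exact mul_nonneg_of_nonpos_of_nonpos (by linarith) (by linarith)
    · have h1 : A j ≤ A i := Real.rpow_le_rpow (hr j).le h hα
      have h2 : u j ≤ u i := Real.rpow_le_rpow (hr j).le h (by linarith)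
      have h3 : u j ^ 2 ≤ u i ^ 2 := by nlinarith [hupos i, hupos j]
      exact mul_nonneg (by linarith) (by linarith)
  have hCS : (∑ i, A i * u i) ^ 2 ≤ (∑ i, A i) * ∑ i, A i * u i ^ 2 := by
    refine Finset.sum_sq_le_sum_mul_sum_of_sq_eq_mul Finset.univ
      (fun i _ => (hApos i).le) (fun i _ => mul_nonneg (hApos i).le (sq_nonneg _)) ?_
    intro i _
    ring
  have hCheb : (∑ i, A i ^ 2) * (∑ i, A i * u i ^ 2) ≤
      (∑ i, A i) * ∑ i, A i ^ 2 * u i ^ 2 :=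
    cheb_aux A (fun i => u i ^ 2) (fun i => (hApos i).le) hmono
  have hTa : (0:ℝ) ≤ ∑ i, A i ^ 2 := Finset.sum_nonneg fun i _ => sq_nonneg _
  have hsq : ∑ i, (A i * u i) ^ 2 = ∑ i, A i ^ 2 * u i ^ 2 := by
    apply Finset.sum_congr rfl
    intro i _
    ring
  calc (∑ i, A i ^ 2) * (∑ i, A i * u i) ^ 2
      ≤ (∑ i, A i ^ 2) * ((∑ i, A i) * ∑ i, A i * u i ^ 2) := by
        exact mul_le_mul_of_nonneg_left hCS hTa
    _ = ((∑ i, A i ^ 2) * (∑ i, A i * u i ^ 2)) * (∑ i, A i) := by ring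
    _ ≤ ((∑ i, A i) * ∑ i, A i ^ 2 * u i ^ 2) * (∑ i, A i) := by
        exact mul_le_mul_of_nonneg_right hCheb hSA.le
    _ = (∑ i, (A i * u i) ^ 2) * (∑ i, A i) ^ 2 := by rw [hsq]; ring
end
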